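/- Let a, b ∈ ℂ with a ≠ 0, and define ψ(ζ) := conj(a)·((a+b)ζ − (a−b)·f(ζ)) / ((conj(a)+conj(b))ζ + (conj(a)−conj(b))·f(ζ)). Then ζ²·(ψ(ζ) − b) tends to (|a|² − |b|²)/(4·conj(a)) as |ζ| → ∞. -/

import Mathlib

/-- The branch `f(ζ) = ζ·(1 − ζ⁻²)^{1/2}` of `(ζ² − 1)^{1/2}` with `f(ζ) ~ ζ` at infinity. -/
noncomputable def fbr (ζ : ℂ) : ℂ := ζ * (1 - ζ⁻¹ ^ 2) ^ ((1 : ℂ) / 2)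

lemma sq_half (z : ℂ) : z ^ ((1:ℂ)/2) * z ^ ((1:ℂ)/2) = z := by
  rcases eq_or_ne z 0 with rfl | hz
  · rw [Complex.zero_cpow (by norm_num)]; ring
  · rw [← Complex.cpow_add _ _ hz]; norm_num

/-- The asymptotics `ψ(ζ) = b + O(ζ⁻²)` of the one-cavity solution:
`ζ²(ψ(ζ) − b) → (|a|² − |b|²)/(4 conj a)` as `|ζ| → ∞`. -/
theorem stmt_10 (a b : ℂ) (ha : a ≠ 0) :
    Filter.Tendsto
      (fun ζ : ℂ => ζ ^ 2 *
        ((starRingEnd ℂ) a * ((a + b) * ζ - (a - b) * fbr ζ) /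
          (((starRingEnd ℂ) a + (starRingEnd ℂ) b) * ζ +
            ((starRingEnd ℂ) a - (starRingEnd ℂ) b) * fbr ζ) - b))
      (Filter.cocompact ℂ)
      (nhds (((‖a‖ ^ 2 - ‖b‖ ^ 2 : ℝ) : ℂ) / (4 * (starRingEnd ℂ) a))) := by
  set s : ℂ → ℂ := fun ζ => (1 - ζ⁻¹ ^ 2) ^ ((1:ℂ)/2) with hs_def
  set A := (starRingEnd ℂ) a
  set B := (starRingEnd ℂ) b
  have hA : A ≠ 0 := by simpa [A] using ha
  have hinv : Filter.Tendsto (fun ζ : ℂ => ζ⁻¹) (Filter.cocompact ℂ) (nhds 0) := by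
    rw [tendsto_zero_iff_norm_tendsto_zero]
    simp only [sub_zero, norm_inv]; exact (tendsto_norm_cocompact_atTop (E := ℂ)).inv_tendsto_atTop
  have h1 : Filter.Tendsto (fun ζ : ℂ => 1 - ζ⁻¹ ^ 2) (Filter.cocompact ℂ) (nhds 1) := by
    have := tendsto_const_nhds (α := ℂ) (f := Filter.cocompact ℂ) (x := (1:ℂ)) |>.sub
      ((hinv.pow 2))
    simpa using this
  have hc : ContinuousAt (fun z : ℂ => z ^ ((1:ℂ)/2)) 1 :=
    continuousAt_cpow_const Complex.one_mem_slitPlane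
  have hs : Filter.Tendsto s (Filter.cocompact ℂ) (nhds 1) := by
    have := hc.tendsto.comp h1
    simpa [hs_def, Function.comp_def] using this
  have hD : Filter.Tendsto (fun ζ => (A + B) + (A - B) * s ζ) (Filter.cocompact ℂ)
      (nhds (2 * A)) := by
    have := (tendsto_const_nhds (x := A + B)).add ((tendsto_const_nhds (x := A - B)).mul hs)
    convert this using 2 <;> ring
  have hE : Filter.Tendsto (fun ζ => 1 + s ζ) (Filter.cocompact ℂ) (nhds 2) := by
    have := (tendsto_const_nhds (x := (1:ℂ))).add hs
    convert this using 2 <;> norm_num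
  have hlim : Filter.Tendsto
      (fun ζ => (A * a - B * b) / ((1 + s ζ) * ((A + B) + (A - B) * s ζ)))
      (Filter.cocompact ℂ) (nhds ((A * a - B * b) / (2 * (2 * A)))) :=
    tendsto_const_nhds.div (hE.mul hD) (by simp [hA])
  have hconst : (((‖a‖ ^ 2 - ‖b‖ ^ 2 : ℝ) : ℂ) / (4 * A))
      = (A * a - B * b) / (2 * (2 * A)) := by
    have h1 : ((‖a‖ : ℝ) : ℂ) ^ 2 = a * A := by
      rw [← Complex.ofReal_pow, Complex.sq_norm, ← Complex.mul_conj]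
    have h2 : ((‖b‖ : ℝ) : ℂ) ^ 2 = b * B := by
      rw [← Complex.ofReal_pow, Complex.sq_norm, ← Complex.mul_conj]
    push_cast
    rw [h1, h2]
    ring
  rw [hconst]
  refine hlim.congr' ?_
  have h0 : ∀ᶠ ζ : ℂ in Filter.cocompact ℂ, ζ ≠ 0 := by
    have := (tendsto_norm_cocompact_atTop (E := ℂ)).eventually (Filter.eventually_gt_atTop 0)
    filter_upwards [this] with ζ hζ
    exact fun h => by simp [h] at hζ
  have hD0 : ∀ᶠ ζ : ℂ in Filter.cocompact ℂ, (A + B) + (A - B) * s ζ ≠ 0 :=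
    hD.eventually_ne (by simp [hA])
  have hE0 : ∀ᶠ ζ : ℂ in Filter.cocompact ℂ, 1 + s ζ ≠ 0 :=
    hE.eventually_ne two_ne_zero
  filter_upwards [h0, hD0, hE0] with ζ hζ hDζ hEζ
  have hfbr : fbr ζ = ζ * s ζ := rfl
  have ht2 : ζ ^ 2 * (s ζ * s ζ) = ζ ^ 2 - 1 := by
    rw [hs_def]
    simp only
    rw [sq_half]
    field_simp
  have e3 : ζ ^ 2 * (1 - s ζ) * (1 + s ζ) = 1 := by linear_combination -ht2
  have hζD : ζ * ((A + B) + (A - B) * s ζ) ≠ 0 := mul_ne_zero hζ hDζ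
  have hden : (A + B) * ζ + (A - B) * (ζ * s ζ) = ζ * ((A + B) + (A - B) * s ζ) := by
    ring
  rw [hfbr, hden]
  have e2 : A * ((a + b) * ζ - (a - b) * (ζ * s ζ)) / (ζ * ((A + B) + (A - B) * s ζ)) - b
      = (A * a - B * b) * (1 - s ζ) / ((A + B) + (A - B) * s ζ) := by
    rw [div_sub' hζD]
    rw [show A * ((a + b) * ζ - (a - b) * (ζ * s ζ)) - ζ * ((A + B) + (A - B) * s ζ) * b
        = ζ * ((A * a - B * b) * (1 - s ζ)) by ring]
    exact mul_div_mul_left _ _ hζ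
  rw [e2, ← mul_div_assoc, div_eq_div_iff (mul_ne_zero hEζ hDζ) hDζ]
  linear_combination -(A * a - B * b) * ((A + B) + (A - B) * s ζ) * e3
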